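/- Assume the insertion setup, assume K is a simple lattice, and assume that for every x ∈ L with x < a one has cg_L(x,a) = ∇_L and for every y ∈ L with b < y one has cg_L(b,y) = ∇_L. Then Princ M is order-isomorphic to Princ L. -/
import Mathlib


/-- A congruence of a lattice: an equivalence relation compatible with `⊔` and `⊓`. -/
structure LatCon (L : Type*) [Lattice L] where
  rel : L → L → Prop
  refl : ∀ x, rel x x
  symm : ∀ {x y}, rel x y → rel y x
  trans : ∀ {x y z}, rel x y → rel y z → rel x z
  sup : ∀ {x₁ y₁ x₂ y₂}, rel x₁ y₁ → rel x₂ y₂ → rel (x₁ ⊔ x₂) (y₁ ⊔ y₂)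
  inf : ∀ {x₁ y₁ x₂ y₂}, rel x₁ y₁ → rel x₂ y₂ → rel (x₁ ⊓ x₂) (y₁ ⊓ y₂)

/-- The principal congruence `cg(a,b)`: the smallest congruence collapsing `a` and `b`. -/
def latCg {L : Type*} [Lattice L] (a b : L) : L → L → Prop :=
  fun x y => ∀ θ : LatCon L, θ.rel a b → θ.rel x y

/-- `Princ L`: the set of principal congruences of `L`, ordered by inclusion. -/
def Princ (L : Type*) [Lattice L] :=
  {r : L → L → Prop // ∃ a b : L, a ≤ b ∧ r = latCg a b}

instance (L : Type*) [Lattice L] : PartialOrder (Princ L) :=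
  Subtype.partialOrder _

/-- A lattice is simple if it has at least two elements and its only congruences
are the equality congruence `Δ` and the full congruence `∇`. -/
def IsSimpleLat (L : Type*) [Lattice L] : Prop :=
  Nontrivial L ∧ ∀ θ : LatCon L, (∀ x y, θ.rel x y ↔ x = y) ∨ (∀ x y, θ.rel x y)

/-! ### Auxiliary development -/

structure InsSetup {M : Type*} [Lattice M] (a b : M) (L : Sublattice M) : Prop where
  hab : a < b
  haL : a ∈ L
  hbL : b ∈ L
  hUnion : ∀ x : M, x ∈ L ∨ x ∈ Set.Icc a b
  hInter : (L : Set M) ∩ Set.Icc a b = {a, b}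
  horder : ∀ k ∈ Set.Icc a b, ∀ l ∈ (L : Set M) \ Set.Icc a b,
      (k ≤ l ↔ b ≤ l ∨ (k = a ∧ a ≤ l)) ∧ (l ≤ k ↔ l ≤ a ∨ (k = b ∧ l ≤ b))
  hK : IsSimpleLat ↥(Set.Icc a b)
  hcga : ∀ x : ↥L, x < ⟨a, haL⟩ → ∀ u v : ↥L, latCg x ⟨a, haL⟩ u v
  hcgb : ∀ y : ↥L, (⟨b, hbL⟩ : ↥L) < y → ∀ u v : ↥L, latCg (⟨b, hbL⟩ : ↥L) y u v

namespace InsSetup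

variable {M : Type*} [Lattice M] {a b : M} {L : Sublattice M} (S : InsSetup a b L)
include S

/-- the bottom of the inserted interval, as an element of `L` -/
protected def A : ↥L := ⟨a, S.haL⟩
/-- the top of the inserted interval, as an element of `L` -/
protected def B : ↥L := ⟨b, S.hbL⟩

lemma A_lt_B : S.A < S.B := S.hab

lemma mem_K_of_not {x : M} (hx : x ∉ L) : a < x ∧ x < b := by
  rcases S.hUnion x with h | h
  · exact absurd h hx
  · exact ⟨h.1.lt_of_ne (by rintro rfl; exact hx S.haL),
      h.2.lt_of_ne (by rintro rfl; exact hx S.hbL)⟩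

lemma eq_of_mem_both {x : M} (hx : x ∈ L) (hx2 : x ∈ Set.Icc a b) : x = a ∨ x = b := by
  have h : x ∈ ((L : Set M) ∩ Set.Icc a b) := ⟨hx, hx2⟩
  rw [S.hInter] at h
  simpa using h

lemma b_le_sup {x l : M} (hx : x ∉ L) (hl : l ∈ L) (hla : ¬ l ≤ a) : b ≤ x ⊔ l := by
  obtain ⟨hax, hxb⟩ := S.mem_K_of_not hx
  by_cases hs : x ⊔ l ∈ L
  · by_cases hsK : x ⊔ l ∈ Set.Icc a b
    · rcases S.eq_of_mem_both hs hsK with h | h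
      · exact absurd (le_sup_left.trans_eq h) hax.not_ge
      · exact h.ge
    · have h := (S.horder x ⟨hax.le, hxb.le⟩ (x ⊔ l) ⟨hs, hsK⟩).1
      rcases h.mp le_sup_left with h' | ⟨h', _⟩
      · exact h'
      · exact absurd h' hax.ne'
  · by_cases hlK : l ∈ Set.Icc a b
    · rcases S.eq_of_mem_both hl hlK with rfl | rfl
      · exact absurd le_rfl hla
      · exact le_sup_right
    · have h := (S.horder (x ⊔ l) ⟨hax.le.trans le_sup_left, (S.mem_K_of_not hs).2.le⟩
        l ⟨hl, hlK⟩).2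
      rcases h.mp le_sup_right with h' | ⟨h', _⟩
      · exact absurd h' hla
      · exact h'.ge

lemma sup_eq {x l : M} (hx : x ∉ L) (hl : l ∈ L) (hla : ¬ l ≤ a) : x ⊔ l = b ⊔ l :=
  le_antisymm (sup_le_sup_right (S.mem_K_of_not hx).2.le l)
    (sup_le (S.b_le_sup hx hl hla) le_sup_right)

lemma inf_le_a {x l : M} (hx : x ∉ L) (hl : l ∈ L) (hlb : ¬ b ≤ l) : x ⊓ l ≤ a := by
  obtain ⟨hax, hxb⟩ := S.mem_K_of_not hx
  by_cases hs : x ⊓ l ∈ L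
  · by_cases hsK : x ⊓ l ∈ Set.Icc a b
    · rcases S.eq_of_mem_both hs hsK with h | h
      · exact h.le
      · exact absurd (h.symm.trans_le inf_le_left) hxb.not_ge
    · have h := (S.horder x ⟨hax.le, hxb.le⟩ (x ⊓ l) ⟨hs, hsK⟩).2
      rcases h.mp inf_le_left with h' | ⟨h', _⟩
      · exact h'
      · exact absurd h' hxb.ne
  · by_cases hlK : l ∈ Set.Icc a b
    · rcases S.eq_of_mem_both hl hlK with rfl | rfl
      · exact inf_le_right
      · exact absurd le_rfl hlb
    · have h := (S.horder (x ⊓ l) ⟨(S.mem_K_of_not hs).1.le, (inf_le_left.trans hxb.le)⟩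
        l ⟨hl, hlK⟩).1
      rcases h.mp inf_le_right with h' | ⟨h', _⟩
      · exact absurd h' hlb
      · exact h'.le

lemma inf_eq {x l : M} (hx : x ∉ L) (hl : l ∈ L) (hlb : ¬ b ≤ l) : x ⊓ l = a ⊓ l :=
  le_antisymm (le_inf (S.inf_le_a hx hl hlb) inf_le_right)
    (inf_le_inf_right l (S.mem_K_of_not hx).1.le)

lemma collapse_up (α : LatCon ↥L) {l : ↥L} (h : α.rel S.A l) (hl : S.A < l) :
    α.rel S.A S.B := by
  have hmem : (↑(l ⊓ S.B) : M) ∈ Set.Icc a b :=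
    ⟨le_inf hl.le S.hab.le, inf_le_right⟩
  rcases S.eq_of_mem_both (l ⊓ S.B).2 hmem with he | he
  · -- l ⊓ B = A : use hcgb on l ⊔ B
    have hj : S.B < l ⊔ S.B := by
      refine lt_of_le_of_ne le_sup_right fun hBj => ?_
      have hlB : l ≤ S.B := le_sup_left.trans hBj.ge
      have h2 : l ⊓ S.B = l := inf_eq_left.mpr hlB
      rw [h2] at he
      exact hl.ne' (Subtype.ext he)
    have h2 : α.rel S.B (l ⊔ S.B) := by
      have h3 := α.sup h (α.refl S.B)
      rwa [show S.A ⊔ S.B = S.B from sup_eq_right.mpr S.hab.le] at h3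
    exact S.hcgb _ hj S.A S.B α h2
  · -- l ⊓ B = B
    have h2 := α.inf h (α.refl S.B)
    rw [show S.A ⊓ S.B = S.A from inf_eq_left.mpr S.hab.le,
      show l ⊓ S.B = S.B from Subtype.ext he] at h2
    exact h2

lemma collapse_down (α : LatCon ↥L) {l : ↥L} (h : α.rel l S.B) (hl : l < S.B) :
    α.rel S.A S.B := by
  have hmem : (↑(l ⊔ S.A) : M) ∈ Set.Icc a b :=
    ⟨le_sup_right, sup_le hl.le S.hab.le⟩
  rcases S.eq_of_mem_both (l ⊔ S.A).2 hmem with he | he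
  · -- l ⊔ A = A
    have h2 := α.sup h (α.refl S.A)
    rw [show S.B ⊔ S.A = S.B from sup_eq_left.mpr S.hab.le,
      show l ⊔ S.A = S.A from Subtype.ext he] at h2
    exact h2
  · -- l ⊔ A = B : use hcga on l ⊓ A
    have hj : l ⊓ S.A < S.A := by
      refine lt_of_le_of_ne inf_le_right fun hAj => ?_
      have hAl : S.A ≤ l := hAj.ge.trans inf_le_left
      have h2 : l ⊔ S.A = l := sup_eq_left.mpr hAl
      rw [h2] at he
      exact hl.ne (Subtype.ext he)
    have h2 : α.rel (l ⊓ S.A) S.A := by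
      have h3 := α.inf h (α.refl S.A)
      rwa [show S.B ⊓ S.A = S.A from inf_eq_right.mpr S.hab.le] at h3
    exact S.hcga _ hj S.A S.B α h2

lemma collapse1 (α : LatCon ↥L) {u v : ↥L} (h : α.rel u v) (hu : u ≤ S.A)
    (hv : ¬ v ≤ S.A) : α.rel S.A S.B := by
  have h2 := α.sup h (α.refl S.A)
  rw [show u ⊔ S.A = S.A from sup_eq_right.mpr hu] at h2
  refine S.collapse_up α h2 (lt_of_le_of_ne le_sup_right fun hh => hv ?_)
  exact le_sup_left.trans hh.ge

lemma collapse2 (α : LatCon ↥L) {u v : ↥L} (h : α.rel u v) (hu : S.B ≤ u)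
    (hv : ¬ S.B ≤ v) : α.rel S.A S.B := by
  have h2 := α.inf h (α.refl S.B)
  rw [show u ⊓ S.B = S.B from inf_eq_right.mpr hu] at h2
  refine S.collapse_down α (α.symm h2) (lt_of_le_of_ne inf_le_right fun hh => hv ?_)
  exact hh.ge.trans inf_le_left

open Classical in
/-- project `M` onto `L`, sending the interior of the interval to `a`. -/
noncomputable def p (x : M) : ↥L := if h : x ∈ L then ⟨x, h⟩ else S.A

open Classical in
/-- project `M` onto `L`, sending the interior of the interval to `b`. -/
noncomputable def q (x : M) : ↥L := if h : x ∈ L then ⟨x, h⟩ else S.B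

lemma p_mem {x : M} (hx : x ∈ L) : S.p x = ⟨x, hx⟩ := dif_pos hx
lemma p_not {x : M} (hx : x ∉ L) : S.p x = S.A := dif_neg hx
lemma q_mem {x : M} (hx : x ∈ L) : S.q x = ⟨x, hx⟩ := dif_pos hx
lemma q_not {x : M} (hx : x ∉ L) : S.q x = S.B := dif_neg hx
lemma p_coe (u : ↥L) : S.p ↑u = u := by rw [S.p_mem u.2]
lemma q_coe (u : ↥L) : S.q ↑u = u := by rw [S.q_mem u.2]

lemma hom_q_sup (x y : M) : S.q (x ⊔ y) = S.q x ⊔ S.q y := by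
  have aux : ∀ x y : M, x ∉ L → y ∈ L → S.q (x ⊔ y) = S.q x ⊔ S.q y := by
    intro x y hx hy
    by_cases hya : y ≤ a
    · rw [sup_eq_left.mpr (hya.trans (S.mem_K_of_not hx).1.le), S.q_not hx, S.q_mem hy]
      exact Subtype.ext (sup_eq_left.mpr (hya.trans S.hab.le)).symm
    · rw [S.sup_eq hx hy hya, S.q_mem (L.supClosed S.hbL hy), S.q_not hx, S.q_mem hy]
      rfl
  by_cases hx : x ∈ L <;> by_cases hy : y ∈ L
  · rw [S.q_mem hx, S.q_mem hy, S.q_mem (L.supClosed hx hy)]; rfl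
  · rw [sup_comm x y, sup_comm (S.q x) (S.q y)]; exact aux y x hy hx
  · exact aux x y hx hy
  · have hq : S.q (x ⊔ y) = S.B := by
      by_cases hs : x ⊔ y ∈ L
      · rcases S.eq_of_mem_both hs ⟨(S.mem_K_of_not hx).1.le.trans le_sup_left,
          sup_le (S.mem_K_of_not hx).2.le (S.mem_K_of_not hy).2.le⟩ with h | h
        · exact absurd (le_sup_left.trans_eq h) (S.mem_K_of_not hx).1.not_ge
        · rw [S.q_mem hs]; exact Subtype.ext h
      · exact S.q_not hs
    rw [hq, S.q_not hx, S.q_not hy]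
    exact (sup_idem S.B).symm

lemma hom_p_inf (x y : M) : S.p (x ⊓ y) = S.p x ⊓ S.p y := by
  have aux : ∀ x y : M, x ∉ L → y ∈ L → S.p (x ⊓ y) = S.p x ⊓ S.p y := by
    intro x y hx hy
    by_cases hyb : b ≤ y
    · rw [inf_eq_left.mpr ((S.mem_K_of_not hx).2.le.trans hyb), S.p_not hx, S.p_mem hy]
      exact Subtype.ext (inf_eq_left.mpr (S.hab.le.trans hyb)).symm
    · rw [S.inf_eq hx hy hyb, S.p_mem (L.infClosed S.haL hy), S.p_not hx, S.p_mem hy]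
      rfl
  by_cases hx : x ∈ L <;> by_cases hy : y ∈ L
  · rw [S.p_mem hx, S.p_mem hy, S.p_mem (L.infClosed hx hy)]; rfl
  · rw [inf_comm x y, inf_comm (S.p x) (S.p y)]; exact aux y x hy hx
  · exact aux x y hx hy
  · have hp : S.p (x ⊓ y) = S.A := by
      by_cases hs : x ⊓ y ∈ L
      · rcases S.eq_of_mem_both hs ⟨le_inf (S.mem_K_of_not hx).1.le (S.mem_K_of_not hy).1.le,
          inf_le_left.trans (S.mem_K_of_not hx).2.le⟩ with h | h
        · rw [S.p_mem hs]; exact Subtype.ext h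
        · exact absurd (h.symm.trans_le inf_le_left) (S.mem_K_of_not hx).2.not_ge
      · exact S.p_not hs
    rw [hp, S.p_not hx, S.p_not hy]
    exact (inf_idem S.A).symm

lemma p_sup (α : LatCon ↥L) (hC : α.rel S.A S.B) (x y : M) :
    α.rel (S.p (x ⊔ y)) (S.p x ⊔ S.p y) := by
  have aux : ∀ x y : M, x ∉ L → y ∈ L → α.rel (S.p (x ⊔ y)) (S.p x ⊔ S.p y) := by
    intro x y hx hy
    by_cases hya : y ≤ a
    · rw [sup_eq_left.mpr (hya.trans (S.mem_K_of_not hx).1.le), S.p_not hx, S.p_mem hy,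
        show S.A ⊔ (⟨y, hy⟩ : ↥L) = S.A from sup_eq_left.mpr hya]
      exact α.refl _
    · rw [S.sup_eq hx hy hya, S.p_mem (L.supClosed S.hbL hy), S.p_not hx, S.p_mem hy]
      exact α.sup (α.symm hC) (α.refl ⟨y, hy⟩)
  by_cases hx : x ∈ L <;> by_cases hy : y ∈ L
  · rw [S.p_mem hx, S.p_mem hy, S.p_mem (L.supClosed hx hy)]; exact α.refl _
  · rw [sup_comm x y, sup_comm (S.p x) (S.p y)]; exact aux y x hy hx
  · exact aux x y hx hy
  · rw [S.p_not hx, S.p_not hy, sup_idem]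
    by_cases hs : x ⊔ y ∈ L
    · rcases S.eq_of_mem_both hs ⟨(S.mem_K_of_not hx).1.le.trans le_sup_left,
        sup_le (S.mem_K_of_not hx).2.le (S.mem_K_of_not hy).2.le⟩ with h | h
      · rw [S.p_mem hs, show (⟨x ⊔ y, hs⟩ : ↥L) = S.A from Subtype.ext h]; exact α.refl _
      · rw [S.p_mem hs, show (⟨x ⊔ y, hs⟩ : ↥L) = S.B from Subtype.ext h]; exact α.symm hC
    · rw [S.p_not hs]; exact α.refl _

lemma q_inf (α : LatCon ↥L) (hC : α.rel S.A S.B) (x y : M) :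
    α.rel (S.q (x ⊓ y)) (S.q x ⊓ S.q y) := by
  have aux : ∀ x y : M, x ∉ L → y ∈ L → α.rel (S.q (x ⊓ y)) (S.q x ⊓ S.q y) := by
    intro x y hx hy
    by_cases hyb : b ≤ y
    · rw [inf_eq_left.mpr ((S.mem_K_of_not hx).2.le.trans hyb), S.q_not hx, S.q_mem hy,
        show S.B ⊓ (⟨y, hy⟩ : ↥L) = S.B from inf_eq_left.mpr hyb]
      exact α.refl _
    · rw [S.inf_eq hx hy hyb, S.q_mem (L.infClosed S.haL hy), S.q_not hx, S.q_mem hy]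
      exact α.inf hC (α.refl ⟨y, hy⟩)
  by_cases hx : x ∈ L <;> by_cases hy : y ∈ L
  · rw [S.q_mem hx, S.q_mem hy, S.q_mem (L.infClosed hx hy)]; exact α.refl _
  · rw [inf_comm x y, inf_comm (S.q x) (S.q y)]; exact aux y x hy hx
  · exact aux x y hx hy
  · rw [S.q_not hx, S.q_not hy, inf_idem]
    by_cases hs : x ⊓ y ∈ L
    · rcases S.eq_of_mem_both hs ⟨le_inf (S.mem_K_of_not hx).1.le (S.mem_K_of_not hy).1.le,
        inf_le_left.trans (S.mem_K_of_not hx).2.le⟩ with h | h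
      · rw [S.q_mem hs, show (⟨x ⊓ y, hs⟩ : ↥L) = S.A from Subtype.ext h]; exact hC
      · rw [S.q_mem hs, show (⟨x ⊓ y, hs⟩ : ↥L) = S.B from Subtype.ext h]; exact α.refl _
    · rw [S.q_not hs]; exact α.refl _

/-- The extension of a congruence `α` of `L` to `M`. -/
def Erel (α : LatCon ↥L) (x y : M) : Prop :=
  α.rel (S.p x) (S.p y) ∧ α.rel (S.q x) (S.q y) ∧
    (x = y ∨ x ∈ L ∨ y ∈ L ∨ α.rel S.A S.B)

lemma E_refl (α : LatCon ↥L) (x : M) : S.Erel α x x :=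
  ⟨α.refl _, α.refl _, Or.inl rfl⟩

lemma E_of_L (α : LatCon ↥L) {x y : M} (hx : x ∈ L) (hy : y ∈ L)
    (h : α.rel ⟨x, hx⟩ ⟨y, hy⟩) : S.Erel α x y := by
  refine ⟨?_, ?_, Or.inr (Or.inl hx)⟩
  · rwa [S.p_mem hx, S.p_mem hy]
  · rwa [S.q_mem hx, S.q_mem hy]

lemma E_iff_L (α : LatCon ↥L) (u v : ↥L) : S.Erel α ↑u ↑v ↔ α.rel u v := by
  constructor
  · intro h
    have h1 := h.1
    rwa [S.p_coe, S.p_coe] at h1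
  · intro h
    have := S.E_of_L α u.2 v.2 (by simpa using h)
    simpa using this

lemma E_cases (α : LatCon ↥L) {x y : M} (h : S.Erel α x y) (hC : ¬ α.rel S.A S.B) :
    x = y ∨ (∃ hx : x ∈ L, ∃ hy : y ∈ L, α.rel ⟨x, hx⟩ ⟨y, hy⟩) := by
  obtain ⟨h1, h2, h3⟩ := h
  by_cases hx : x ∈ L <;> by_cases hy : y ∈ L
  · right
    rw [S.p_mem hx, S.p_mem hy] at h1
    exact ⟨hx, hy, h1⟩
  · exfalso
    rw [S.p_mem hx, S.p_not hy] at h1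
    rw [S.q_mem hx, S.q_not hy] at h2
    exact hC (α.trans (α.symm h1) h2)
  · exfalso
    rw [S.p_not hx, S.p_mem hy] at h1
    rw [S.q_not hx, S.q_mem hy] at h2
    exact hC (α.trans h1 (α.symm h2))
  · left
    rcases h3 with h | h | h | h
    · exact h
    · exact absurd h hx
    · exact absurd h hy
    · exact absurd h hC

lemma E_symm (α : LatCon ↥L) {x y : M} (h : S.Erel α x y) : S.Erel α y x := by
  obtain ⟨h1, h2, h3⟩ := h
  refine ⟨α.symm h1, α.symm h2, ?_⟩
  rcases h3 with h | h | h | h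
  · exact Or.inl h.symm
  · exact Or.inr (Or.inr (Or.inl h))
  · exact Or.inr (Or.inl h)
  · exact Or.inr (Or.inr (Or.inr h))

lemma E_trans (α : LatCon ↥L) {x y z : M} (hxy : S.Erel α x y) (hyz : S.Erel α y z) :
    S.Erel α x z := by
  refine ⟨α.trans hxy.1 hyz.1, α.trans hxy.2.1 hyz.2.1, ?_⟩
  by_cases hC : α.rel S.A S.B
  · exact Or.inr (Or.inr (Or.inr hC))
  by_cases hx : x ∈ L
  · exact Or.inr (Or.inl hx)
  by_cases hz : z ∈ L
  · exact Or.inr (Or.inr (Or.inl hz))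
  left
  rcases S.E_cases α hxy hC with rfl | ⟨hx', _⟩
  · rcases S.E_cases α hyz hC with rfl | ⟨hy', _⟩
    · rfl
    · exact absurd hy' hx
  · exact absurd hx' hx

lemma E_sup_one (α : LatCon ↥L) (hC : ¬ α.rel S.A S.B) (z : M) {x y : M}
    (hx : x ∈ L) (hy : y ∈ L) (h : α.rel ⟨x, hx⟩ ⟨y, hy⟩) :
    S.Erel α (z ⊔ x) (z ⊔ y) := by
  by_cases hz : z ∈ L
  · exact S.E_of_L α (L.supClosed hz hx) (L.supClosed hz hy)
      (α.sup (α.refl ⟨z, hz⟩) h)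
  · by_cases hxa : x ≤ a <;> by_cases hya : y ≤ a
    · rw [sup_eq_left.mpr (hxa.trans (S.mem_K_of_not hz).1.le),
        sup_eq_left.mpr (hya.trans (S.mem_K_of_not hz).1.le)]
      exact S.E_refl α z
    · exact absurd (S.collapse1 α h hxa hya) hC
    · exact absurd (S.collapse1 α (α.symm h) hya hxa) hC
    · rw [S.sup_eq hz hx hxa, S.sup_eq hz hy hya]
      exact S.E_of_L α (L.supClosed S.hbL hx) (L.supClosed S.hbL hy)
        (α.sup (α.refl S.B) h)

lemma E_inf_one (α : LatCon ↥L) (hC : ¬ α.rel S.A S.B) (z : M) {x y : M}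
    (hx : x ∈ L) (hy : y ∈ L) (h : α.rel ⟨x, hx⟩ ⟨y, hy⟩) :
    S.Erel α (z ⊓ x) (z ⊓ y) := by
  by_cases hz : z ∈ L
  · exact S.E_of_L α (L.infClosed hz hx) (L.infClosed hz hy)
      (α.inf (α.refl ⟨z, hz⟩) h)
  · by_cases hxb : b ≤ x <;> by_cases hyb : b ≤ y
    · rw [inf_eq_left.mpr ((S.mem_K_of_not hz).2.le.trans hxb),
        inf_eq_left.mpr ((S.mem_K_of_not hz).2.le.trans hyb)]
      exact S.E_refl α z
    · exact absurd (S.collapse2 α h hxb hyb) hC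
    · exact absurd (S.collapse2 α (α.symm h) hyb hxb) hC
    · rw [S.inf_eq hz hx hxb, S.inf_eq hz hy hyb]
      exact S.E_of_L α (L.infClosed S.haL hx) (L.infClosed S.haL hy)
        (α.inf (α.refl S.A) h)

lemma E_sup (α : LatCon ↥L) {x₁ y₁ x₂ y₂ : M} (h1 : S.Erel α x₁ y₁)
    (h2 : S.Erel α x₂ y₂) : S.Erel α (x₁ ⊔ x₂) (y₁ ⊔ y₂) := by
  by_cases hC : α.rel S.A S.B
  · refine ⟨?_, ?_, Or.inr (Or.inr (Or.inr hC))⟩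
    · exact α.trans (S.p_sup α hC x₁ x₂)
        (α.trans (α.sup h1.1 h2.1) (α.symm (S.p_sup α hC y₁ y₂)))
    · rw [S.hom_q_sup, S.hom_q_sup]
      exact α.sup h1.2.1 h2.2.1
  · rcases S.E_cases α h1 hC with rfl | ⟨hx1, hy1, hr1⟩
    · rcases S.E_cases α h2 hC with rfl | ⟨hx2, hy2, hr2⟩
      · exact S.E_refl α _
      · exact S.E_sup_one α hC x₁ hx2 hy2 hr2
    · rcases S.E_cases α h2 hC with rfl | ⟨hx2, hy2, hr2⟩
      · rw [sup_comm x₁ x₂, sup_comm y₁ x₂]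
        exact S.E_sup_one α hC x₂ hx1 hy1 hr1
      · exact S.E_of_L α (L.supClosed hx1 hx2) (L.supClosed hy1 hy2)
          (α.sup hr1 hr2)

lemma E_inf (α : LatCon ↥L) {x₁ y₁ x₂ y₂ : M} (h1 : S.Erel α x₁ y₁)
    (h2 : S.Erel α x₂ y₂) : S.Erel α (x₁ ⊓ x₂) (y₁ ⊓ y₂) := by
  by_cases hC : α.rel S.A S.B
  · refine ⟨?_, ?_, Or.inr (Or.inr (Or.inr hC))⟩
    · rw [S.hom_p_inf, S.hom_p_inf]
      exact α.inf h1.1 h2.1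
    · exact α.trans (S.q_inf α hC x₁ x₂)
        (α.trans (α.inf h1.2.1 h2.2.1) (α.symm (S.q_inf α hC y₁ y₂)))
  · rcases S.E_cases α h1 hC with rfl | ⟨hx1, hy1, hr1⟩
    · rcases S.E_cases α h2 hC with rfl | ⟨hx2, hy2, hr2⟩
      · exact S.E_refl α _
      · exact S.E_inf_one α hC x₁ hx2 hy2 hr2
    · rcases S.E_cases α h2 hC with rfl | ⟨hx2, hy2, hr2⟩
      · rw [inf_comm x₁ x₂, inf_comm y₁ x₂]
        exact S.E_inf_one α hC x₂ hx1 hy1 hr1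
      · exact S.E_of_L α (L.infClosed hx1 hx2) (L.infClosed hy1 hy2)
          (α.inf hr1 hr2)

/-- The extension congruence on `M`. -/
noncomputable def ECon (α : LatCon ↥L) : LatCon M where
  rel := S.Erel α
  refl := S.E_refl α
  symm := S.E_symm α
  trans := S.E_trans α
  sup := S.E_sup α
  inf := S.E_inf α

end InsSetup

/-- restriction of a congruence to a sublattice -/
def LatCon.restrictL {M : Type*} [Lattice M] (L : Sublattice M) (Θ : LatCon M) :
    LatCon ↥L where
  rel u v := Θ.rel ↑u ↑v
  refl _ := Θ.refl _
  symm h := Θ.symm h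
  trans h h' := Θ.trans h h'
  sup h h' := Θ.sup h h'
  inf h h' := Θ.inf h h'

/-- restriction of a congruence to a closed interval -/
def LatCon.restrictK {M : Type*} [Lattice M] (a b : M) (Θ : LatCon M) :
    LatCon ↥(Set.Icc a b) where
  rel u v := Θ.rel ↑u ↑v
  refl _ := Θ.refl _
  symm h := Θ.symm h
  trans h h' := Θ.trans h h'
  sup h h' := Θ.sup h h'
  inf h h' := Θ.inf h h'

namespace InsSetup

variable {M : Type*} [Lattice M] {a b : M} {L : Sublattice M} (S : InsSetup a b L)
include S

lemma collapse_ab (Θ : LatCon M) {x y : M} (h : Θ.rel x y) (hx : x ∈ Set.Icc a b)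
    (hy : y ∈ Set.Icc a b) (hxy : x ≠ y) : Θ.rel a b := by
  rcases S.hK.2 (Θ.restrictK a b) with hD | hF
  · exact absurd (Subtype.ext_iff.mp ((hD ⟨x, hx⟩ ⟨y, hy⟩).mp h)) hxy
  · exact hF ⟨a, le_rfl, S.hab.le⟩ ⟨b, S.hab.le, le_rfl⟩

omit S in
lemma collapse_interval (Θ : LatCon M) {c d x y : M} (h : Θ.rel c d) (h1 : c ≤ x)
    (h2 : x ≤ y) (h3 : y ≤ d) : Θ.rel x y := by
  have hx : Θ.rel x d := by
    have h4 := Θ.sup (Θ.refl x) h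
    rwa [sup_eq_left.mpr h1, sup_eq_right.mpr (h2.trans h3)] at h4
  have hy : Θ.rel y d := by
    have h4 := Θ.sup (Θ.refl y) h
    rwa [sup_eq_left.mpr (h1.trans h2), sup_eq_right.mpr h3] at h4
  exact Θ.trans hx (Θ.symm hy)

lemma restrict_latCg (c d u v : ↥L) :
    latCg (↑c : M) ↑d ↑u ↑v ↔ latCg c d u v := by
  constructor
  · intro h α hα
    exact (S.E_iff_L α u v).mp (h (S.ECon α) ((S.E_iff_L α c d).mpr hα))
  · intro h Θ hΘ
    exact h (Θ.restrictL L) hΘ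

omit S in
lemma latCg_congr {x y x' y' : M} (h : ∀ Θ : LatCon M, Θ.rel x y ↔ Θ.rel x' y') :
    latCg x y = latCg x' y' := by
  funext u v
  exact propext ⟨fun hh Θ hΘ => hh Θ ((h Θ).mpr hΘ), fun hh Θ hΘ => hh Θ ((h Θ).mp hΘ)⟩

lemma normalize {x y : M} (hxy : x ≤ y) :
    ∃ c d : ↥L, c ≤ d ∧ latCg x y = latCg (↑c : M) ↑d := by
  rcases eq_or_lt_of_le hxy with rfl | hlt
  · exact ⟨S.A, S.A, le_rfl, latCg_congr fun Θ => iff_of_true (Θ.refl _) (Θ.refl _)⟩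
  by_cases hx : x ∈ L <;> by_cases hy : y ∈ L
  · exact ⟨⟨x, hx⟩, ⟨y, hy⟩, hxy, rfl⟩
  · -- x ∈ L, y ∉ L : x ≤ a, the pair is (x, b)
    obtain ⟨hay, hyb⟩ := S.mem_K_of_not hy
    have hxa : x ≤ a := by
      by_cases hxK : x ∈ Set.Icc a b
      · rcases S.eq_of_mem_both hx hxK with rfl | rfl
        · exact le_rfl
        · exact absurd (hlt.trans hyb) (lt_irrefl _)
      · rcases (S.horder y ⟨hay.le, hyb.le⟩ x ⟨hx, hxK⟩).2.mp hxy with h | ⟨hb, _⟩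
        · exact h
        · exact absurd (hb ▸ S.hbL) hy
    refine ⟨⟨x, hx⟩, S.B, hxa.trans S.hab.le, latCg_congr fun Θ => ⟨?_, ?_⟩⟩
    · intro h
      have hay' : Θ.rel a y := by
        have h4 := Θ.sup h (Θ.refl a)
        rwa [sup_eq_right.mpr hxa, sup_eq_left.mpr hay.le] at h4
      have hab' : Θ.rel a b :=
        S.collapse_ab Θ hay' ⟨le_rfl, S.hab.le⟩ ⟨hay.le, hyb.le⟩ hay.ne
      exact Θ.trans h (collapse_interval Θ hab' hay.le hyb.le le_rfl)
    · intro h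
      exact collapse_interval Θ h le_rfl hxy hyb.le
  · -- x ∉ L, y ∈ L : b ≤ y, the pair is (a, y)
    obtain ⟨hax, hxb⟩ := S.mem_K_of_not hx
    have hby : b ≤ y := by
      by_cases hyK : y ∈ Set.Icc a b
      · rcases S.eq_of_mem_both hy hyK with rfl | rfl
        · exact absurd (hax.trans hlt) (lt_irrefl _)
        · exact le_rfl
      · rcases (S.horder x ⟨hax.le, hxb.le⟩ y ⟨hy, hyK⟩).1.mp hxy with h | ⟨ha, _⟩
        · exact h
        · exact absurd (ha ▸ S.haL) hx
    refine ⟨S.A, ⟨y, hy⟩, S.hab.le.trans hby, latCg_congr fun Θ => ⟨?_, ?_⟩⟩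
    · intro h
      have hxb' : Θ.rel x b := by
        have h4 := Θ.inf h (Θ.refl b)
        rwa [inf_eq_left.mpr hxb.le, inf_eq_right.mpr hby] at h4
      have hab' : Θ.rel a b :=
        S.collapse_ab Θ hxb' ⟨hax.le, hxb.le⟩ ⟨S.hab.le, le_rfl⟩ hxb.ne
      have hb_y : Θ.rel b y := by
        have h4 := Θ.sup h (Θ.refl b)
        rwa [sup_eq_right.mpr hxb.le, sup_eq_left.mpr hby] at h4
      exact Θ.trans hab' hb_y
    · intro h
      exact collapse_interval Θ h hax.le hxy le_rfl
  · -- x ∉ L, y ∉ L : the pair is (a, b)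
    obtain ⟨hax, hxb⟩ := S.mem_K_of_not hx
    obtain ⟨hay, hyb⟩ := S.mem_K_of_not hy
    refine ⟨S.A, S.B, S.hab.le, latCg_congr fun Θ => ⟨?_, ?_⟩⟩
    · intro h
      exact S.collapse_ab Θ h ⟨hax.le, hxb.le⟩ ⟨hay.le, hyb.le⟩ hlt.ne
    · intro h
      exact collapse_interval Θ h hax.le hxy hyb.le

end InsSetup


/-- restriction of a relation to a sublattice -/
def downR {M : Type*} [Lattice M] (L : Sublattice M) (r : M → M → Prop) :
    ↥L → ↥L → Prop := fun u v => r ↑u ↑v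

/-- the congruence of `M` generated by a relation on `L` -/
def upR {M : Type*} [Lattice M] (L : Sublattice M) (ρ : ↥L → ↥L → Prop) :
    M → M → Prop :=
  fun x y => ∀ Θ : LatCon M, (∀ u v : ↥L, ρ u v → Θ.rel ↑u ↑v) → Θ.rel x y

lemma upR_latCg {M : Type*} [Lattice M] (L : Sublattice M) (u v : ↥L) :
    upR L (latCg u v) = latCg (↑u : M) ↑v := by
  funext x y
  apply propext
  constructor
  · intro h Θ hΘ
    exact h Θ fun u' v' hrel => hrel (Θ.restrictL L) hΘ
  · intro h Θ hg
    exact h Θ (hg u v fun α hα => hα)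

lemma downR_latCg {M : Type*} [Lattice M] {a b : M} {L : Sublattice M}
    (S : InsSetup a b L) (c d : ↥L) : downR L (latCg (↑c : M) ↑d) = latCg c d :=
  funext fun u => funext fun v => propext (S.restrict_latCg c d u v)

/-- the restriction map on principal congruences -/
def downP {M : Type*} [Lattice M] {a b : M} {L : Sublattice M}
    (S : InsSetup a b L) (r : Princ M) : Princ ↥L :=
  ⟨downR L r.1, by
    obtain ⟨x, y, hxy, hr⟩ := r.2
    obtain ⟨c, d, hcd, heq⟩ := S.normalize hxy
    exact ⟨c, d, hcd, by rw [hr, heq, downR_latCg S]⟩⟩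

/-- the extension map on principal congruences -/
def upP {M : Type*} [Lattice M] (L : Sublattice M) (ρ : Princ ↥L) : Princ M :=
  ⟨upR L ρ.1, by
    obtain ⟨u, v, huv, hρ⟩ := ρ.2
    exact ⟨↑u, ↑v, huv, by rw [hρ, upR_latCg]⟩⟩

theorem princ_iso_of_insertion' {M : Type*} [Lattice M] (a b : M) (L : Sublattice M)
    (hab : a < b) (haL : a ∈ L) (hbL : b ∈ L)
    (hUnion : ∀ x : M, x ∈ L ∨ x ∈ Set.Icc a b)
    (hInter : (L : Set M) ∩ Set.Icc a b = {a, b})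
    (hcov : ∀ l ∈ L, ¬(a < l ∧ l < b))
    (horder : ∀ k ∈ Set.Icc a b, ∀ l ∈ (L : Set M) \ Set.Icc a b,
      (k ≤ l ↔ b ≤ l ∨ (k = a ∧ a ≤ l)) ∧ (l ≤ k ↔ l ≤ a ∨ (k = b ∧ l ≤ b)))
    (hKsimple : IsSimpleLat ↥(Set.Icc a b))
    (hcga : ∀ x : ↥L, x < ⟨a, haL⟩ → ∀ u v : ↥L, latCg x ⟨a, haL⟩ u v)
    (hcgb : ∀ y : ↥L, (⟨b, hbL⟩ : ↥L) < y → ∀ u v : ↥L, latCg (⟨b, hbL⟩ : ↥L) y u v) :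
    Nonempty (Princ M ≃o Princ ↥L) := by
  have S : InsSetup a b L := ⟨hab, haL, hbL, hUnion, hInter, horder, hKsimple, hcga, hcgb⟩
  have hleft : ∀ r : Princ M, upP L (downP S r) = r := by
    intro r
    apply Subtype.ext
    obtain ⟨x, y, hxy, hr⟩ := r.2
    obtain ⟨c, d, hcd, heq⟩ := S.normalize hxy
    show upR L (downR L r.1) = r.1
    rw [hr, heq, downR_latCg S, upR_latCg]
  have hright : ∀ ρ : Princ ↥L, downP S (upP L ρ) = ρ := by
    intro ρ
    apply Subtype.ext
    obtain ⟨u, v, huv, hρ⟩ := ρ.2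
    show downR L (upR L ρ.1) = ρ.1
    rw [hρ, upR_latCg, downR_latCg S]
  refine ⟨{ toFun := downP S, invFun := upP L, left_inv := hleft, right_inv := hright,
            map_rel_iff' := @fun r s => ⟨fun h => ?_, fun h => ?_⟩ }⟩
  · rw [← hleft r, ← hleft s]
    intro x y hx Θ hg
    exact hx Θ fun u v hu => hg u v (h u v hu)
  · intro u v hu
    exact h ↑u ↑v hu


/-- **Lemma.** (Insertion setup:) `M` is a lattice, `a < b` in `M`, `K = [a,b]` is the
interval of `M`, and `L` is a sublattice of `M` with `M = L ∪ K`, `L ∩ K = {a,b}`,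
`b` covering `a` in `L`, and the comparabilities between `K` and `L \ K` as described.
If `K` is simple and, in `L`, `cg(x,a) = ∇` for all `x < a` and `cg(b,y) = ∇` for all
`b < y`, then `Princ M` is order-isomorphic to `Princ L`. -/
theorem princ_iso_of_insertion {M : Type*} [Lattice M] (a b : M) (L : Sublattice M)
    (hab : a < b) (haL : a ∈ L) (hbL : b ∈ L)
    (hUnion : ∀ x : M, x ∈ L ∨ x ∈ Set.Icc a b)
    (hInter : (L : Set M) ∩ Set.Icc a b = {a, b})
    (hcov : ∀ l ∈ L, ¬(a < l ∧ l < b))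
    (horder : ∀ k ∈ Set.Icc a b, ∀ l ∈ (L : Set M) \ Set.Icc a b,
      (k ≤ l ↔ b ≤ l ∨ (k = a ∧ a ≤ l)) ∧ (l ≤ k ↔ l ≤ a ∨ (k = b ∧ l ≤ b)))
    (hKsimple : IsSimpleLat ↥(Set.Icc a b))
    (hcga : ∀ x : ↥L, x < ⟨a, haL⟩ → ∀ u v : ↥L, latCg x ⟨a, haL⟩ u v)
    (hcgb : ∀ y : ↥L, (⟨b, hbL⟩ : ↥L) < y → ∀ u v : ↥L, latCg (⟨b, hbL⟩ : ↥L) y u v) :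
    Nonempty (Princ M ≃o Princ ↥L) := by
  exact princ_iso_of_insertion' a b L hab haL hbL hUnion hInter hcov horder hKsimple hcga hcgb
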